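/- For every integer n ≥ 0, the squared norm Nr²(JO_n) = Σ_{s=0}^{7} (J_{n+s})² equals: (1/49)(87380·4^n + 1024·2^n + 41) if n ≡ 0 (mod 3); (1/49)(87380·4^n + 4·2^n + 38) if n ≡ 1 (mod 3); and (1/49)(87380·4^n − 1028·2^n + 33) if n ≡ 2 (mod 3). Equivalently, 49·Σ_{s=0}^{7} (J_{n+s})² equals 87380·4^n + 1024·2^n + 41, 87380·4^n + 4·2^n + 38, or 87380·4^n − 1028·2^n + 33 in the respective cases. -/

import Mathlib

open Quaternion

noncomputable section

/-- The octonions, built from pairs of quaternions via the Cayley–Dickson construction. -/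
def Octonion : Type := ℍ[ℝ] × ℍ[ℝ]

namespace Octonion

instance : AddCommGroup Octonion := inferInstanceAs (AddCommGroup (ℍ[ℝ] × ℍ[ℝ]))
instance : Module ℝ Octonion := inferInstanceAs (Module ℝ (ℍ[ℝ] × ℍ[ℝ]))

instance : One Octonion := ⟨((1, 0) : ℍ[ℝ] × ℍ[ℝ])⟩

/-- Cayley–Dickson multiplication `(a,b)·(c,d) = (ac - d̄b, da + bc̄)`; this realizes the
standard octonion multiplication table (`e₁e₂ = e₃`, `e₁e₄ = e₅`, `e₂e₄ = e₆`,
`e₃e₄ = e₇`, `eₛ² = -1` for `1 ≤ s ≤ 7`, …). -/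
instance : Mul Octonion :=
  ⟨fun p q =>
    ((p : ℍ[ℝ] × ℍ[ℝ]).1 * (q : ℍ[ℝ] × ℍ[ℝ]).1
        - star (q : ℍ[ℝ] × ℍ[ℝ]).2 * (p : ℍ[ℝ] × ℍ[ℝ]).2,
      (q : ℍ[ℝ] × ℍ[ℝ]).2 * (p : ℍ[ℝ] × ℍ[ℝ]).1
        + (p : ℍ[ℝ] × ℍ[ℝ]).2 * star (q : ℍ[ℝ] × ℍ[ℝ]).1)⟩

/-- The standard basis `e₀ = 1, e₁, …, e₇` of the octonions. -/
def e : Fin 8 → Octonion :=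
  ![((1, 0) : ℍ[ℝ] × ℍ[ℝ]),
    ((⟨0, 1, 0, 0⟩, 0) : ℍ[ℝ] × ℍ[ℝ]),
    ((⟨0, 0, 1, 0⟩, 0) : ℍ[ℝ] × ℍ[ℝ]),
    ((⟨0, 0, 0, 1⟩, 0) : ℍ[ℝ] × ℍ[ℝ]),
    ((0, 1) : ℍ[ℝ] × ℍ[ℝ]),
    ((0, ⟨0, 1, 0, 0⟩) : ℍ[ℝ] × ℍ[ℝ]),
    ((0, ⟨0, 0, 1, 0⟩) : ℍ[ℝ] × ℍ[ℝ]),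
    ((0, ⟨0, 0, 0, 1⟩) : ℍ[ℝ] × ℍ[ℝ])]

end Octonion

/-- The third order Jacobsthal numbers: `J₀ = 0`, `J₁ = 1`, `J₂ = 1`,
`J_{n+3} = J_{n+2} + J_{n+1} + 2·J_n`. -/
def J3 : ℕ → ℕ
  | 0 => 0
  | 1 => 1
  | 2 => 1
  | n + 3 => J3 (n + 2) + J3 (n + 1) + 2 * J3 n

/-- The third order Jacobsthal–Lucas numbers: `j₀ = 2`, `j₁ = 1`, `j₂ = 5`,
`j_{n+3} = j_{n+2} + j_{n+1} + 2·j_n`. -/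
def j3 : ℕ → ℕ
  | 0 => 2
  | 1 => 1
  | 2 => 5
  | n + 3 => j3 (n + 2) + j3 (n + 1) + 2 * j3 n

/-- The `n`-th third order Jacobsthal octonion `JO_n = ∑_{s=0}^{7} J_{n+s} e_s`. -/
def JO (n : ℕ) : Octonion :=
  ∑ s : Fin 8, (J3 (n + (s : ℕ)) : ℝ) • Octonion.e s

/-- The `n`-th third order Jacobsthal–Lucas octonion `jO_n = ∑_{s=0}^{7} j_{n+s} e_s`. -/
def jO (n : ℕ) : Octonion :=
  ∑ s : Fin 8, (j3 (n + (s : ℕ)) : ℝ) • Octonion.e s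


lemma key : ∀ n : ℕ, (7:ℝ) * J3 (3*n) = 2^(3*n+1) - 2 ∧ (7:ℝ)*J3 (3*n+1) = 2^(3*n+2)+3 ∧
    (7:ℝ)*J3 (3*n+2) = 2^(3*n+3)-1 := by
  intro n
  induction n with
  | zero => norm_num [J3]
  | succ k ih =>
    obtain ⟨h0, h1, h2⟩ := ih
    have g3 : (7:ℝ)*J3 (3*k+3) = 2^(3*k+4)-2 := by
      rw [show (3*k+3 : ℕ) = (3*k)+3 by omega, J3]; push_cast; linear_combination 2*h0+h1+h2
    have g4 : (7:ℝ)*J3 (3*k+4) = 2^(3*k+5)+3 := by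
      rw [show (3*k+4 : ℕ) = (3*k+1)+3 by omega, J3,
          show (3*k+1+2 : ℕ) = 3*k+3 by omega, show (3*k+1+1 : ℕ) = 3*k+2 by omega]
      push_cast; linear_combination g3+h2+2*h1
    have g5 : (7:ℝ)*J3 (3*k+5) = 2^(3*k+6)-1 := by
      rw [show (3*k+5 : ℕ) = (3*k+2)+3 by omega, J3,
          show (3*k+2+2 : ℕ) = 3*k+4 by omega, show (3*k+2+1 : ℕ) = 3*k+3 by omega]
      push_cast; linear_combination g4+g3+2*h2
    refine ⟨?_, ?_, ?_⟩
    · rw [show 3*(k+1) = 3*k+3 by omega]; linear_combination g3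
    · rw [show 3*(k+1)+1 = 3*k+4 by omega]; linear_combination g4
    · rw [show 3*(k+1)+2 = 3*k+5 by omega]; linear_combination g5

lemma key' (m : ℕ) : (7:ℝ) * J3 m =
    2^(m+1) + (if m % 3 = 0 then -2 else if m % 3 = 1 then 3 else -1) := by
  obtain ⟨q, r, hr, rfl⟩ : ∃ q r, r < 3 ∧ m = 3*q + r := ⟨m/3, m%3, by omega, by omega⟩
  interval_cases r
  · have := (key q).1; norm_num; linarith
  · have := (key q).2.1
    rw [show 3*q+1+1 = 3*q+2 by omega] at this
    rw [show (3*q+1)%3 = 1 by omega]; norm_num; linarith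
  · have := (key q).2.2
    rw [show 3*q+2+1 = 3*q+3 by omega] at this
    rw [show (3*q+2)%3 = 2 by omega]; norm_num; linarith

theorem norm_sq_JO (n : ℕ) :
    (n % 3 = 0 →
      (49 : ℝ) * ∑ s : Fin 8, (J3 (n + (s : ℕ)) : ℝ) ^ 2 =
        87380 * 4 ^ n + 1024 * 2 ^ n + 41) ∧
    (n % 3 = 1 →
      (49 : ℝ) * ∑ s : Fin 8, (J3 (n + (s : ℕ)) : ℝ) ^ 2 =
        87380 * 4 ^ n + 4 * 2 ^ n + 38) ∧
    (n % 3 = 2 →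
      (49 : ℝ) * ∑ s : Fin 8, (J3 (n + (s : ℕ)) : ℝ) ^ 2 =
        87380 * 4 ^ n - 1028 * 2 ^ n + 33) := by
  refine ⟨?_, ?_, ?_⟩
  · intro h
    have k0 : (7:ℝ)*J3 n = 2^(n+1) - 2 := by
      have := key' (n); rw [show (n)%3 = 0 by omega] at this
      norm_num at this; linarith
    have k1 : (7:ℝ)*J3 (n+1) = 2^(n+2) + 3 := by
      have := key' (n+1); rw [show (n+1)%3 = 1 by omega] at this
      norm_num at this; linarith
    have k2 : (7:ℝ)*J3 (n+2) = 2^(n+3) - 1 := by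
      have := key' (n+2); rw [show (n+2)%3 = 2 by omega] at this
      norm_num at this; linarith
    have k3 : (7:ℝ)*J3 (n+3) = 2^(n+4) - 2 := by
      have := key' (n+3); rw [show (n+3)%3 = 0 by omega] at this
      norm_num at this; linarith
    have k4 : (7:ℝ)*J3 (n+4) = 2^(n+5) + 3 := by
      have := key' (n+4); rw [show (n+4)%3 = 1 by omega] at this
      norm_num at this; linarith
    have k5 : (7:ℝ)*J3 (n+5) = 2^(n+6) - 1 := by
      have := key' (n+5); rw [show (n+5)%3 = 2 by omega] at this
      norm_num at this; linarith
    have k6 : (7:ℝ)*J3 (n+6) = 2^(n+7) - 2 := by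
      have := key' (n+6); rw [show (n+6)%3 = 0 by omega] at this
      norm_num at this; linarith
    have k7 : (7:ℝ)*J3 (n+7) = 2^(n+8) + 3 := by
      have := key' (n+7); rw [show (n+7)%3 = 1 by omega] at this
      norm_num at this; linarith
    rw [Fin.sum_univ_eight]
    norm_num [show ((2:Fin 8):ℕ)=2 from rfl, show ((3:Fin 8):ℕ)=3 from rfl,
      show ((4:Fin 8):ℕ)=4 from rfl, show ((5:Fin 8):ℕ)=5 from rfl,
      show ((6:Fin 8):ℕ)=6 from rfl, show ((7:Fin 8):ℕ)=7 from rfl]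
    rw [show (4:ℝ)^n = 2^n * 2^n by rw [← mul_pow]; norm_num]
    linear_combination (7*(J3 n:ℝ) + 2^(n+1) - 2)*k0 +
      (7*(J3 (n+1):ℝ) + 2^(n+2) + 3)*k1 +
      (7*(J3 (n+2):ℝ) + 2^(n+3) - 1)*k2 +
      (7*(J3 (n+3):ℝ) + 2^(n+4) - 2)*k3 +
      (7*(J3 (n+4):ℝ) + 2^(n+5) + 3)*k4 +
      (7*(J3 (n+5):ℝ) + 2^(n+6) - 1)*k5 +
      (7*(J3 (n+6):ℝ) + 2^(n+7) - 2)*k6 +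
      (7*(J3 (n+7):ℝ) + 2^(n+8) + 3)*k7
  · intro h
    have k0 : (7:ℝ)*J3 n = 2^(n+1) + 3 := by
      have := key' (n); rw [show (n)%3 = 1 by omega] at this
      norm_num at this; linarith
    have k1 : (7:ℝ)*J3 (n+1) = 2^(n+2) - 1 := by
      have := key' (n+1); rw [show (n+1)%3 = 2 by omega] at this
      norm_num at this; linarith
    have k2 : (7:ℝ)*J3 (n+2) = 2^(n+3) - 2 := by
      have := key' (n+2); rw [show (n+2)%3 = 0 by omega] at this
      norm_num at this; linarith
    have k3 : (7:ℝ)*J3 (n+3) = 2^(n+4) + 3 := by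
      have := key' (n+3); rw [show (n+3)%3 = 1 by omega] at this
      norm_num at this; linarith
    have k4 : (7:ℝ)*J3 (n+4) = 2^(n+5) - 1 := by
      have := key' (n+4); rw [show (n+4)%3 = 2 by omega] at this
      norm_num at this; linarith
    have k5 : (7:ℝ)*J3 (n+5) = 2^(n+6) - 2 := by
      have := key' (n+5); rw [show (n+5)%3 = 0 by omega] at this
      norm_num at this; linarith
    have k6 : (7:ℝ)*J3 (n+6) = 2^(n+7) + 3 := by
      have := key' (n+6); rw [show (n+6)%3 = 1 by omega] at this
      norm_num at this; linarith
    have k7 : (7:ℝ)*J3 (n+7) = 2^(n+8) - 1 := by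
      have := key' (n+7); rw [show (n+7)%3 = 2 by omega] at this
      norm_num at this; linarith
    rw [Fin.sum_univ_eight]
    norm_num [show ((2:Fin 8):ℕ)=2 from rfl, show ((3:Fin 8):ℕ)=3 from rfl,
      show ((4:Fin 8):ℕ)=4 from rfl, show ((5:Fin 8):ℕ)=5 from rfl,
      show ((6:Fin 8):ℕ)=6 from rfl, show ((7:Fin 8):ℕ)=7 from rfl]
    rw [show (4:ℝ)^n = 2^n * 2^n by rw [← mul_pow]; norm_num]
    linear_combination (7*(J3 n:ℝ) + 2^(n+1) + 3)*k0 +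
      (7*(J3 (n+1):ℝ) + 2^(n+2) - 1)*k1 +
      (7*(J3 (n+2):ℝ) + 2^(n+3) - 2)*k2 +
      (7*(J3 (n+3):ℝ) + 2^(n+4) + 3)*k3 +
      (7*(J3 (n+4):ℝ) + 2^(n+5) - 1)*k4 +
      (7*(J3 (n+5):ℝ) + 2^(n+6) - 2)*k5 +
      (7*(J3 (n+6):ℝ) + 2^(n+7) + 3)*k6 +
      (7*(J3 (n+7):ℝ) + 2^(n+8) - 1)*k7
  · intro h
    have k0 : (7:ℝ)*J3 n = 2^(n+1) - 1 := by
      have := key' (n); rw [show (n)%3 = 2 by omega] at this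
      norm_num at this; linarith
    have k1 : (7:ℝ)*J3 (n+1) = 2^(n+2) - 2 := by
      have := key' (n+1); rw [show (n+1)%3 = 0 by omega] at this
      norm_num at this; linarith
    have k2 : (7:ℝ)*J3 (n+2) = 2^(n+3) + 3 := by
      have := key' (n+2); rw [show (n+2)%3 = 1 by omega] at this
      norm_num at this; linarith
    have k3 : (7:ℝ)*J3 (n+3) = 2^(n+4) - 1 := by
      have := key' (n+3); rw [show (n+3)%3 = 2 by omega] at this
      norm_num at this; linarith
    have k4 : (7:ℝ)*J3 (n+4) = 2^(n+5) - 2 := by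
      have := key' (n+4); rw [show (n+4)%3 = 0 by omega] at this
      norm_num at this; linarith
    have k5 : (7:ℝ)*J3 (n+5) = 2^(n+6) + 3 := by
      have := key' (n+5); rw [show (n+5)%3 = 1 by omega] at this
      norm_num at this; linarith
    have k6 : (7:ℝ)*J3 (n+6) = 2^(n+7) - 1 := by
      have := key' (n+6); rw [show (n+6)%3 = 2 by omega] at this
      norm_num at this; linarith
    have k7 : (7:ℝ)*J3 (n+7) = 2^(n+8) - 2 := by
      have := key' (n+7); rw [show (n+7)%3 = 0 by omega] at this
      norm_num at this; linarith
    rw [Fin.sum_univ_eight]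
    norm_num [show ((2:Fin 8):ℕ)=2 from rfl, show ((3:Fin 8):ℕ)=3 from rfl,
      show ((4:Fin 8):ℕ)=4 from rfl, show ((5:Fin 8):ℕ)=5 from rfl,
      show ((6:Fin 8):ℕ)=6 from rfl, show ((7:Fin 8):ℕ)=7 from rfl]
    rw [show (4:ℝ)^n = 2^n * 2^n by rw [← mul_pow]; norm_num]
    linear_combination (7*(J3 n:ℝ) + 2^(n+1) - 1)*k0 +
      (7*(J3 (n+1):ℝ) + 2^(n+2) - 2)*k1 +
      (7*(J3 (n+2):ℝ) + 2^(n+3) + 3)*k2 +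
      (7*(J3 (n+3):ℝ) + 2^(n+4) - 1)*k3 +
      (7*(J3 (n+4):ℝ) + 2^(n+5) - 2)*k4 +
      (7*(J3 (n+5):ℝ) + 2^(n+6) + 3)*k5 +
      (7*(J3 (n+6):ℝ) + 2^(n+7) - 1)*k6 +
      (7*(J3 (n+7):ℝ) + 2^(n+8) - 2)*k7

end
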